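/- Let A be a positive stochastic H×H real matrix and let ε > 0 be the minimum of the entries of A. Then for every x ≥ 0 and every pair of indices i, j, the (i,j) entry of exp(xA) satisfies (exp(xA))ᵢⱼ ≥ ε·(eˣ − 1). In particular, every entry of exp(xA) tends to +∞ as x → +∞. -/

import Mathlib

open Matrix Filter
open scoped Nat

/-- Powers of a row-stochastic nonnegative matrix stay row-stochastic, and for `n ≥ 1`
every entry is at least the minimum entry bound `ε`. -/
lemma stmt7_pow_aux {H : ℕ} (A : Matrix (Fin H) (Fin H) ℝ) (ε : ℝ) (hε : 0 < ε)
    (hA : ∀ i j, ε ≤ A i j) (hrow : ∀ i, ∑ j, A i j = 1) :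
    ∀ n : ℕ, (∀ i j, 0 ≤ (A ^ n) i j) ∧ (∀ i, ∑ j, (A ^ n) i j = 1) ∧
      (1 ≤ n → ∀ i j, ε ≤ (A ^ n) i j) := by
  intro n
  induction n with
  | zero =>
    refine ⟨?_, ?_, by omega⟩
    · intro i j
      simp only [pow_zero, Matrix.one_apply]
      split <;> norm_num
    · intro i
      simp [pow_zero, Matrix.one_apply, Finset.sum_ite_eq]
  | succ n ih =>
    obtain ⟨h0, h1, _⟩ := ih
    have hentry : ∀ i j, (A ^ (n + 1)) i j = ∑ k, (A ^ n) i k * A k j := by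
      intro i j
      rw [pow_succ, Matrix.mul_apply]
    refine ⟨?_, ?_, ?_⟩
    · intro i j
      rw [hentry]
      exact Finset.sum_nonneg fun k _ => mul_nonneg (h0 i k) (le_of_lt (lt_of_lt_of_le hε (hA k j)))
    · intro i
      simp only [hentry]
      rw [Finset.sum_comm]
      have : ∀ k : Fin H, ∑ j, (A ^ n) i k * A k j = (A ^ n) i k := by
        intro k
        rw [← Finset.mul_sum, hrow k, mul_one]
      simp only [this]
      exact h1 i
    · intro _ i j
      rw [hentry]
      calc ε = ∑ k, (A ^ n) i k * ε := by rw [← Finset.sum_mul, h1 i, one_mul]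
        _ ≤ ∑ k, (A ^ n) i k * A k j :=
          Finset.sum_le_sum fun k _ => mul_le_mul_of_nonneg_left (hA k j) (h0 i k)

set_option maxHeartbeats 1000000 in
/-- Entrywise lower bound for the matrix exponential of a nonnegative stochastic matrix. -/
lemma stmt7_key (H : ℕ) (hH : 1 ≤ H) (A : Matrix (Fin H) (Fin H) ℝ) (ε : ℝ) (hε : 0 < ε)
    (hA : ∀ i j, ε ≤ A i j) (hrow : ∀ i, ∑ j, A i j = 1)
    (x : ℝ) (hx : 0 ≤ x) (i j : Fin H) :
    ε * (Real.exp x - 1) ≤ (NormedSpace.exp (x • A)) i j := by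
  have haux := fun n => stmt7_pow_aux A ε hε hA hrow n
  have h0 := fun n => (haux n).1
  have h1 := fun n => (haux n).2.1
  have h2 := fun n => (haux n).2.2
  -- entries of A^n are at most 1
  have hle1 : ∀ n (i j : Fin H), (A ^ n) i j ≤ 1 := by
    intro n i j
    calc (A ^ n) i j ≤ ∑ k, (A ^ n) i k :=
          Finset.single_le_sum (fun k _ => h0 n i k) (Finset.mem_univ j)
      _ = 1 := h1 n i
  -- the term function
  set f : ℕ → Matrix (Fin H) (Fin H) ℝ := (fun n => (n ! : ℝ)⁻¹ • (x • A) ^ n) with hf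
  have hfentry : ∀ n (a b : Fin H), f n a b = x ^ n / n ! * (A ^ n) a b := by
    intro n a b
    simp only [hf, smul_pow, Matrix.smul_apply, smul_smul, smul_eq_mul]
    ring
  -- entrywise summability
  have hsum_exp : Summable fun n : ℕ => x ^ n / n ! := Real.summable_pow_div_factorial x
  have hterm_nonneg : ∀ n (a b : Fin H), 0 ≤ f n a b := by
    intro n a b
    rw [hfentry]
    exact mul_nonneg (div_nonneg (pow_nonneg hx n) (by positivity)) (h0 n a b)
  have hterm_le : ∀ n (a b : Fin H), f n a b ≤ x ^ n / n ! := by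
    intro n a b
    rw [hfentry]
    calc x ^ n / n ! * (A ^ n) a b ≤ x ^ n / n ! * 1 :=
          mul_le_mul_of_nonneg_left (hle1 n a b) (by positivity)
      _ = x ^ n / n ! := mul_one _
  have hsum_entry : ∀ a b : Fin H, Summable fun n => f n a b := fun a b =>
    Summable.of_nonneg_of_le (hterm_nonneg · a b) (hterm_le · a b) hsum_exp
  have hsumf : Summable f := by
    exact Pi.summable.2 fun a => Pi.summable.2 fun b => hsum_entry a b
  -- entry of exp is the tsum of entries
  have hhs : HasSum f (NormedSpace.exp (x • A)) := by
    have he : NormedSpace.exp (x • A) = ∑' n, f n := by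
      rw [NormedSpace.exp_eq_tsum ℝ]
    rw [he]
    exact hsumf.hasSum
  have hexp : (NormedSpace.exp (x • A)) i j = ∑' n, f n i j :=
    ((Pi.hasSum.mp (Pi.hasSum.mp hhs i) j)).tsum_eq.symm
  rw [hexp]
  -- split off the n = 0 term
  have hshift := Summable.tsum_eq_zero_add (hsum_entry i j)
  rw [hshift]
  have hf0 : 0 ≤ f 0 i j := hterm_nonneg 0 i j
  -- lower bound for the tail
  have hεterm : ∀ n : ℕ, ε * (x ^ (n + 1) / (n + 1)!) ≤ f (n + 1) i j := by
    intro n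
    rw [hfentry]
    rw [mul_comm ε]
    exact mul_le_mul_of_nonneg_left (h2 (n + 1) (by omega) i j) (by positivity)
  have hsum_shift : Summable fun n : ℕ => x ^ (n + 1) / (n + 1)! :=
    (summable_nat_add_iff 1).mpr hsum_exp
  have hsum_shiftε : Summable fun n : ℕ => ε * (x ^ (n + 1) / (n + 1)!) := hsum_shift.mul_left ε
  have hsum_fshift : Summable fun n : ℕ => f (n + 1) i j :=
    (summable_nat_add_iff 1).mpr (hsum_entry i j)
  have htail : ε * (Real.exp x - 1) ≤ ∑' n, f (n + 1) i j := by
    have hexpx : Real.exp x = ∑' n : ℕ, x ^ n / n ! := by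
      rw [Real.exp_eq_exp_ℝ, NormedSpace.exp_eq_tsum_div]
    have : ∑' n : ℕ, x ^ n / n ! = x ^ 0 / 0! + ∑' n : ℕ, x ^ (n + 1) / (n + 1)! :=
      Summable.tsum_eq_zero_add hsum_exp
    have hsub : Real.exp x - 1 = ∑' n : ℕ, x ^ (n + 1) / (n + 1)! := by
      rw [hexpx, this]; norm_num
    rw [hsub, ← tsum_mul_left]
    exact Summable.tsum_le_tsum hεterm hsum_shiftε hsum_fshift
  linarith

/-- If `ε > 0` is the minimum entry of a positive stochastic matrix `A`, then every entry of
`exp(xA)` is at least `ε·(eˣ − 1)` for `x ≥ 0`; in particular every entry of `exp(xA)` tends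
to `+∞` as `x → +∞`. -/
theorem stmt7 (H : ℕ) (hH : 1 ≤ H) (A : Matrix (Fin H) (Fin H) ℝ)
    (hpos : ∀ i j, 0 < A i j) (hrow : ∀ i, ∑ j, A i j = 1)
    (ε : ℝ) (hε : 0 < ε)
    (hmin : IsLeast (Set.range fun p : Fin H × Fin H => A p.1 p.2) ε) :
    (∀ x : ℝ, 0 ≤ x → ∀ i j, ε * (Real.exp x - 1) ≤ (NormedSpace.exp (x • A)) i j) ∧
    (∀ i j, Tendsto (fun x : ℝ => (NormedSpace.exp (x • A)) i j) atTop atTop) := by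
  have hA : ∀ i j, ε ≤ A i j := by
    intro i j
    exact hmin.2 ⟨(i, j), rfl⟩
  have hkey := stmt7_key H hH A ε hε hA hrow
  refine ⟨fun x hx i j => hkey x hx i j, ?_⟩
  intro i j
  have hlow : Tendsto (fun x : ℝ => ε * (Real.exp x - 1)) atTop atTop := by
    exact Tendsto.const_mul_atTop hε (Real.tendsto_exp_atTop.atTop_add tendsto_const_nhds)
  refine tendsto_atTop_mono' atTop ?_ hlow
  filter_upwards [eventually_ge_atTop (0 : ℝ)] with x hx
  exact hkey x hx i j
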